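/- arXiv:2412.03203 — 2 statements merged into one kernel-verified Lean document; each statement's English description precedes it below -/
import Mathlib

section
/- The injective Boolean homomorphism f : B∞ → B∞ × B∞ (as above) admits no Boolean algebra retraction r : B∞ × B∞ → B∞ with r ∘ f = id. -/
/-- `B∞`: the Boolean algebra of finite and cofinite subsets of `ℕ`. -/
def Binf : Type := {s : Set ℕ // s.Finite ∨ sᶜ.Finite}

namespace Binf

lemma mem_union {s t : Set ℕ} (hs : s.Finite ∨ sᶜ.Finite) (ht : t.Finite ∨ tᶜ.Finite) :
    (s ∪ t).Finite ∨ (s ∪ t)ᶜ.Finite := by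
  rcases hs with hs | hs
  · rcases ht with ht | ht
    · exact Or.inl (hs.union ht)
    · exact Or.inr (ht.subset (by rw [Set.compl_union]; exact Set.inter_subset_right))
  · exact Or.inr (hs.subset (by rw [Set.compl_union]; exact Set.inter_subset_left))

lemma mem_compl {s : Set ℕ} (hs : s.Finite ∨ sᶜ.Finite) :
    sᶜ.Finite ∨ sᶜᶜ.Finite := by
  rcases hs with hs | hs
  · exact Or.inr (by rwa [compl_compl])
  · exact Or.inl hs

lemma mem_inter {s t : Set ℕ} (hs : s.Finite ∨ sᶜ.Finite) (ht : t.Finite ∨ tᶜ.Finite) :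
    (s ∩ t).Finite ∨ (s ∩ t)ᶜ.Finite := by
  rcases hs with hs | hs
  · exact Or.inl (hs.subset Set.inter_subset_left)
  · rcases ht with ht | ht
    · exact Or.inl (ht.subset Set.inter_subset_right)
    · exact Or.inr (by rw [Set.compl_inter]; exact hs.union ht)

instance : Max Binf := ⟨fun s t => ⟨s.1 ∪ t.1, mem_union s.2 t.2⟩⟩
instance : Min Binf := ⟨fun s t => ⟨s.1 ∩ t.1, mem_inter s.2 t.2⟩⟩
instance : Top Binf := ⟨⟨Set.univ, Or.inr (by simp)⟩⟩
instance : Bot Binf := ⟨⟨∅, Or.inl (by simp)⟩⟩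
instance : Compl Binf := ⟨fun s => ⟨s.1ᶜ, mem_compl s.2⟩⟩
instance : SDiff Binf := ⟨fun s t => ⟨s.1 \ t.1, mem_inter s.2 (mem_compl t.2)⟩⟩
instance : HImp Binf := ⟨fun s t => ⟨t.1 ∪ s.1ᶜ, mem_union t.2 (mem_compl s.2)⟩⟩

instance : LE Binf := ⟨fun s t => s.1 ≤ t.1⟩
instance : LT Binf := ⟨fun s t => s.1 < t.1⟩

instance : BooleanAlgebra Binf :=
  Function.Injective.booleanAlgebra (fun s : Binf => s.1) Subtype.val_injective
    Iff.rfl Iff.rfl (fun _ _ => rfl) (fun _ _ => rfl) rfl rfl (fun _ => rfl) (fun _ _ => rfl)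
    (fun _ _ => himp_eq.symm)

/-- The Boolean homomorphism `f : B∞ → B∞ × B∞` with `f {2k} = ({k}, ∅)` and
`f {2k+1} = (∅, {k})`, realized by taking preimages along `k ↦ 2k` and `k ↦ 2k+1`. -/
def f (s : Binf) : Binf × Binf :=
  (⟨(fun k => 2 * k) ⁻¹' s.1, by
      rcases s.2 with h | h
      · exact Or.inl (h.preimage (Function.Injective.injOn (fun a b => by omega)))
      · exact Or.inr (by
          rw [← Set.preimage_compl]
          exact h.preimage (Function.Injective.injOn (fun a b => by omega)))⟩,
   ⟨(fun k => 2 * k + 1) ⁻¹' s.1, by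
      rcases s.2 with h | h
      · exact Or.inl (h.preimage (Function.Injective.injOn (fun a b => by omega)))
      · exact Or.inr (by
          rw [← Set.preimage_compl]
          exact h.preimage (Function.Injective.injOn (fun a b => by omega)))⟩)

end Binf

theorem no_boolean_retraction :
    ¬ ∃ r : BoundedLatticeHom (Binf × Binf) Binf, ∀ s : Binf, r (Binf.f s) = s := by
  rintro ⟨r, hr⟩
  set x : Binf := r (⊤, ⊥) with hx
  set y : Binf := r (⊥, ⊤) with hy
  -- every even number is in x
  have hex : ∀ k : ℕ, 2 * k ∈ x.1 := by
    intro k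
    set s : Binf := ⟨{2 * k}, Or.inl (Set.finite_singleton _)⟩ with hs
    have h2 : (Binf.f s).2 = (⊥ : Binf) := by
      apply Subtype.ext
      show (fun j => 2 * j + 1) ⁻¹' ({2 * k} : Set ℕ) = ∅
      apply Set.eq_empty_iff_forall_notMem.mpr
      intro j hj
      rw [Set.mem_preimage, Set.mem_singleton_iff] at hj
      omega
    have hinf : Binf.f s ⊓ ((⊤, ⊥) : Binf × Binf) = Binf.f s := by
      have : Binf.f s = ((Binf.f s).1, (Binf.f s).2) := rfl
      rw [this, h2, Prod.mk_inf_mk, inf_top_eq, inf_bot_eq]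
    have := congrArg r hinf
    rw [map_inf, hr s, ← hx] at this
    have hv := congrArg Subtype.val this
    have : s.1 ∩ x.1 = s.1 := hv
    have : (2 * k) ∈ s.1 ∩ x.1 := by rw [this]; exact rfl
    exact this.2
  have hoy : ∀ k : ℕ, 2 * k + 1 ∈ y.1 := by
    intro k
    set s : Binf := ⟨{2 * k + 1}, Or.inl (Set.finite_singleton _)⟩ with hs
    have h1 : (Binf.f s).1 = (⊥ : Binf) := by
      apply Subtype.ext
      show (fun j => 2 * j) ⁻¹' ({2 * k + 1} : Set ℕ) = ∅
      apply Set.eq_empty_iff_forall_notMem.mpr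
      intro j hj
      rw [Set.mem_preimage, Set.mem_singleton_iff] at hj
      omega
    have hinf : Binf.f s ⊓ ((⊥, ⊤) : Binf × Binf) = Binf.f s := by
      have : Binf.f s = ((Binf.f s).1, (Binf.f s).2) := rfl
      rw [this, h1, Prod.mk_inf_mk, inf_top_eq, inf_bot_eq]
    have := congrArg r hinf
    rw [map_inf, hr s, ← hy] at this
    have hv := congrArg Subtype.val this
    have : s.1 ∩ y.1 = s.1 := hv
    have : (2 * k + 1) ∈ s.1 ∩ y.1 := by rw [this]; exact rfl
    exact this.2
  -- x and y are both cofinite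
  have hxinf : x.1.Infinite :=
    Set.infinite_of_injective_forall_mem (f := fun k : ℕ => 2 * k)
      (fun a b h => by dsimp at h; omega) hex
  have hyinf : y.1.Infinite :=
    Set.infinite_of_injective_forall_mem (f := fun k : ℕ => 2 * k + 1)
      (fun a b h => by dsimp at h; omega) hoy
  have hxc : x.1ᶜ.Finite := x.2.resolve_left hxinf
  have hyc : y.1ᶜ.Finite := y.2.resolve_left hyinf
  -- but x ⊓ y = ⊥
  have hbot : x ⊓ y = (⊥ : Binf) := by
    rw [hx, hy, ← map_inf, Prod.mk_inf_mk, inf_bot_eq, bot_inf_eq]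
    exact map_bot r
  have hv : x.1 ∩ y.1 = (∅ : Set ℕ) := congrArg Subtype.val hbot
  have : (Set.univ : Set ℕ).Finite := by
    have : x.1ᶜ ∪ y.1ᶜ = Set.univ := by
      rw [← Set.compl_inter, hv, Set.compl_empty]
    rw [← this]
    exact hxc.union hyc
  exact Set.infinite_univ this
end

section
/- Every continuous map f : D² → D² from the closed unit disk to itself has a fixed point. -/
open Complex Real Finset

abbrev Disk := {p : ℝ × ℝ // p.1 ^ 2 + p.2 ^ 2 ≤ 1}

noncomputable def toC (z : Disk) : ℂ := ⟨z.1.1, z.1.2⟩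

lemma normSq_toC (z : Disk) : Complex.normSq (toC z) = z.1.1 ^ 2 + z.1.2 ^ 2 := by
  simp [toC, Complex.normSq_mk]; ring

lemma normSq_toC_le_one (z : Disk) : Complex.normSq (toC z) ≤ 1 := by
  rw [normSq_toC]; exact z.2

lemma continuous_toC : Continuous toC := by
  have h : toC = fun z : Disk => (z.1.1 : ℂ) + (z.1.2 : ℂ) * Complex.I := by
    funext z; rw [toC, Complex.mk_eq_add_mul_I]
  rw [h]; fun_prop

lemma toC_injective : Function.Injective toC := by
  intro a b h
  have h1 : a.1.1 = b.1.1 := congrArg Complex.re h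
  have h2 : a.1.2 = b.1.2 := congrArg Complex.im h
  exact Subtype.ext (Prod.ext h1 h2)

noncomputable def uu (f : Disk → Disk) (z : Disk) : ℂ := toC z - toC (f z)
noncomputable def bb (f : Disk → Disk) (z : Disk) : ℝ := (toC z * (starRingEnd ℂ) (uu f z)).re
noncomputable def cc (f : Disk → Disk) (z : Disk) : ℝ :=
  Complex.normSq (uu f z) * (1 - Complex.normSq (toC z))
noncomputable def tt (f : Disk → Disk) (z : Disk) : ℝ :=
  (Real.sqrt (bb f z ^ 2 + cc f z) - bb f z) / Complex.normSq (uu f z)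
noncomputable def ret (f : Disk → Disk) (z : Disk) : ℂ := toC z + (tt f z : ℂ) * uu f z

lemma uu_ne_zero {f : Disk → Disk} {z : Disk} (h : f z ≠ z) : uu f z ≠ 0 := by
  simp only [uu, sub_ne_zero]
  exact fun e => h (toC_injective e.symm)

lemma cc_nonneg (f : Disk → Disk) (z : Disk) : 0 ≤ cc f z :=
  mul_nonneg (Complex.normSq_nonneg _) (by linarith [normSq_toC_le_one z])

lemma normSq_uu_ne {f : Disk → Disk} {z : Disk} (h : f z ≠ z) :
    Complex.normSq (uu f z) ≠ 0 := by
  simpa [Complex.normSq_eq_zero] using uu_ne_zero h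

lemma normSq_ret {f : Disk → Disk} {z : Disk} (h : f z ≠ z) :
    Complex.normSq (ret f z) = 1 := by
  have hq : Complex.normSq (uu f z) ≠ 0 := normSq_uu_ne h
  have hq' : 0 < Complex.normSq (uu f z) :=
    lt_of_le_of_ne (Complex.normSq_nonneg _) (Ne.symm hq)
  have hs : Real.sqrt (bb f z ^ 2 + cc f z) ^ 2 = bb f z ^ 2 + cc f z :=
    Real.sq_sqrt (add_nonneg (sq_nonneg _) (cc_nonneg f z))
  have e1 : (toC z * (starRingEnd ℂ) ((tt f z : ℂ) * uu f z)).re = tt f z * bb f z := by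
    rw [map_mul, Complex.conj_ofReal]
    have e : toC z * ((tt f z : ℂ) * (starRingEnd ℂ) (uu f z)) =
        (tt f z : ℂ) * (toC z * (starRingEnd ℂ) (uu f z)) := by ring
    rw [e, Complex.re_ofReal_mul, bb]
  have expand : Complex.normSq (ret f z) =
      Complex.normSq (toC z) + tt f z ^ 2 * Complex.normSq (uu f z)
        + 2 * (tt f z * bb f z) := by
    rw [ret, Complex.normSq_add, e1, Complex.normSq_mul, Complex.normSq_ofReal]
    ring
  have hcc : cc f z = Complex.normSq (uu f z) * (1 - Complex.normSq (toC z)) := rfl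
  rw [expand, tt]
  field_simp
  nlinarith [hs, hq', hcc]

lemma ret_boundary {f : Disk → Disk} {z : Disk} (h : f z ≠ z)
    (hb : z.1.1 ^ 2 + z.1.2 ^ 2 = 1) : ret f z = toC z := by
  have hx : Complex.normSq (toC z) = 1 := by rw [normSq_toC]; exact hb
  have hcc : cc f z = 0 := by rw [cc, hx]; ring
  have habs : (toC z * (starRingEnd ℂ) (toC (f z))).re ≤ 1 := by
    calc (toC z * (starRingEnd ℂ) (toC (f z))).re
        ≤ ‖toC z * (starRingEnd ℂ) (toC (f z))‖ := Complex.re_le_norm _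
      _ = ‖toC z‖ * ‖toC (f z)‖ := by
          rw [norm_mul, Complex.norm_conj]
      _ ≤ 1 * 1 := by
          apply mul_le_mul _ _ (norm_nonneg _) zero_le_one
          · rw [Complex.norm_def, hx, Real.sqrt_one]
          · rw [Complex.norm_def]
            exact Real.sqrt_le_one.mpr (normSq_toC_le_one _)
      _ = 1 := one_mul 1
  have hbb : 0 ≤ bb f z := by
    have e : bb f z = Complex.normSq (toC z) - (toC z * (starRingEnd ℂ) (toC (f z))).re := by
      rw [bb, uu, map_sub, mul_sub]
      rw [Complex.sub_re, Complex.mul_conj]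
      simp
    rw [e, hx]; linarith
  have ht : tt f z = 0 := by
    rw [tt, hcc, add_zero, Real.sqrt_sq hbb]
    simp
  rw [ret, ht]; simp

lemma continuous_ret {f : Disk → Disk} (hf : Continuous f) (h : ∀ z, f z ≠ z) :
    Continuous (ret f) := by
  have hu : Continuous (uu f) := continuous_toC.sub (continuous_toC.comp hf)
  have hb : Continuous (bb f) :=
    Complex.continuous_re.comp (continuous_toC.mul (Complex.continuous_conj.comp hu))
  have hns : Continuous fun z : Disk => Complex.normSq (uu f z) :=
    Complex.continuous_normSq.comp hu
  have hc : Continuous (cc f) :=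
    hns.mul (continuous_const.sub (Complex.continuous_normSq.comp continuous_toC))
  have ht : Continuous (tt f) :=
    (((Real.continuous_sqrt.comp ((hb.pow 2).add hc)).sub hb)).div hns
      (fun z => normSq_uu_ne (h z))
  exact continuous_toC.add ((Complex.continuous_ofReal.comp ht).mul hu)


noncomputable def cl (s : ℝ) : ℝ := min (max s 0) 1

lemma cl_nonneg (s : ℝ) : 0 ≤ cl s := le_min (le_max_right s 0) zero_le_one
lemma cl_le_one (s : ℝ) : cl s ≤ 1 := min_le_right _ _
lemma cl_zero : cl 0 = 0 := by simp [cl]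
lemma cl_one : cl 1 = 1 := by simp [cl]
lemma continuous_cl : Continuous cl := by unfold cl; fun_prop

noncomputable def pt (s t : ℝ) : Disk :=
  ⟨(cl s * Real.cos t, cl s * Real.sin t), by
    have h0 := cl_nonneg s
    have h1 := cl_le_one s
    have h2 := Real.sin_sq_add_cos_sq t
    simp only
    have e : (cl s * Real.cos t) ^ 2 + (cl s * Real.sin t) ^ 2
        = cl s ^ 2 * (Real.sin t ^ 2 + Real.cos t ^ 2) := by ring
    rw [e, h2, mul_one]
    nlinarith⟩

lemma continuous_pt : Continuous fun q : ℝ × ℝ => pt q.1 q.2 := by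
  apply Continuous.subtype_mk
  have h1 : Continuous fun q : ℝ × ℝ => cl q.1 := continuous_cl.comp continuous_fst
  fun_prop

lemma pt_zero (t : ℝ) : pt 0 t = pt 0 0 := by
  apply Subtype.ext
  simp [pt, cl_zero]

lemma pt_periodic (s : ℝ) : pt s (2 * π) = pt s 0 := by
  apply Subtype.ext
  simp [pt, Real.cos_two_pi, Real.sin_two_pi]

lemma pt_one_boundary (t : ℝ) : (pt 1 t).1.1 ^ 2 + (pt 1 t).1.2 ^ 2 = 1 := by
  have h2 := Real.sin_sq_add_cos_sq t
  simp only [pt, cl_one]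
  nlinarith

lemma toC_pt_one (t : ℝ) : toC (pt 1 t) = Complex.exp (t * Complex.I) := by
  have h : toC (pt 1 t) = (Real.cos t : ℂ) + (Real.sin t : ℂ) * Complex.I := by
    rw [toC, Complex.mk_eq_add_mul_I]
    simp [pt, cl_one]
  rw [h, Complex.exp_mul_I, Complex.ofReal_cos, Complex.ofReal_sin]

theorem brouwer_fixed_point_disk
    (f : {p : ℝ × ℝ // p.1 ^ 2 + p.2 ^ 2 ≤ 1} → {p : ℝ × ℝ // p.1 ^ 2 + p.2 ^ 2 ≤ 1})
    (hf : Continuous f) :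
    ∃ x, f x = x := by
  by_contra hcon
  push_neg at hcon
  -- the retraction composed with polar coordinates
  set G : ℝ × ℝ → ℂ := fun q => ret f (pt q.1 q.2) with hGdef
  have hGcont : Continuous G := (continuous_ret hf hcon).comp continuous_pt
  have hG1 : ∀ q, Complex.normSq (G q) = 1 := fun q => normSq_ret (hcon _)
  -- uniform continuity on a compact rectangle
  set K : Set (ℝ × ℝ) := Set.Icc ((0 : ℝ), (0 : ℝ)) ((1 : ℝ), (9 : ℝ)) with hKdef
  have hK : IsCompact K := isCompact_Icc
  have hUC := hK.uniformContinuousOn_of_continuous hGcont.continuousOn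
  rw [Metric.uniformContinuousOn_iff] at hUC
  obtain ⟨δ, hδ, hδ'⟩ := hUC 1 one_pos
  -- choose a fine subdivision
  obtain ⟨M, hM⟩ := exists_nat_gt (2 * π / δ)
  set N : ℕ := max M 3 with hNdef
  have hN3 : (3 : ℕ) ≤ N := le_max_right _ _
  have hNpos : (0 : ℝ) < N := by
    have : (0 : ℕ) < N := lt_of_lt_of_le (by norm_num) hN3
    exact_mod_cast this
  have hNδ : 2 * π / N < δ := by
    have hMN : (M : ℝ) ≤ N := by exact_mod_cast le_max_left M 3
    rw [div_lt_iff₀ hNpos]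
    have h2 : 2 * π < (N : ℝ) * δ := by
      have := (div_lt_iff₀ hδ).mp (lt_of_lt_of_le hM hMN)
      linarith
    linarith [mul_comm δ (N : ℝ)]
  set tk : ℕ → ℝ := fun k => 2 * π * k / N with htk
  have htk_mem : ∀ k : ℕ, k ≤ N → tk k ∈ Set.Icc (0 : ℝ) 9 := by
    intro k hk
    constructor
    · have := Real.pi_pos; positivity
    · have h4 := Real.pi_le_four
      have hkN : (k : ℝ) ≤ N := by exact_mod_cast hk
      rw [htk, div_le_iff₀ hNpos]
      nlinarith
  have hmem : ∀ s : ℝ, ∀ k : ℕ, k ≤ N → ((cl s, tk k) : ℝ × ℝ) ∈ K := by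
    intro s k hk
    obtain ⟨h1, h2⟩ := htk_mem k hk
    exact Set.mem_Icc.mpr ⟨⟨cl_nonneg s, h1⟩, ⟨cl_le_one s, h2⟩⟩
  have htk_step : ∀ k : ℕ, tk (k + 1) - tk k = 2 * π / N := by
    intro k
    rw [htk]
    push_cast
    field_simp
    ring
  -- adjacent values are close
  have hclose : ∀ s : ℝ, ∀ k : ℕ, k < N →
      ‖G (cl s, tk (k + 1)) - G (cl s, tk k)‖ < 1 := by
    intro s k hk
    have h1 := hmem s (k + 1) hk
    have h2 := hmem s k (le_of_lt hk)
    have hd : dist ((cl s, tk (k + 1)) : ℝ × ℝ) ((cl s, tk k) : ℝ × ℝ) < δ := by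
      rw [Prod.dist_eq]
      simp only
      have e : dist (tk (k + 1)) (tk k) = 2 * π / N := by
        rw [Real.dist_eq, htk_step, abs_of_pos (by positivity)]
      rw [dist_self, e, max_eq_right (by positivity)]
      exact hNδ
    have := hδ' _ h1 _ h2 hd
    rwa [Complex.dist_eq] at this
  -- ratios of consecutive values
  set ρ : ℝ → ℕ → ℂ := fun s k =>
    G (cl s, tk (k + 1)) * (starRingEnd ℂ) (G (cl s, tk k)) with hρ
  have hρre : ∀ s : ℝ, ∀ k : ℕ, k < N → 1 / 2 < (ρ s k).re := by
    intro s k hk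
    have hz := hG1 (cl s, tk (k + 1))
    have hw := hG1 (cl s, tk k)
    have hd := hclose s k hk
    have hns : Complex.normSq (G (cl s, tk (k + 1)) - G (cl s, tk k)) < 1 := by
      rw [← Complex.sq_norm]
      nlinarith [norm_nonneg (G (cl s, tk (k + 1)) - G (cl s, tk k))]
    have e := Complex.normSq_sub (G (cl s, tk (k + 1))) (G (cl s, tk k))
    rw [hz, hw] at e
    simp only [hρ]
    linarith
  have hρslit : ∀ s : ℝ, ∀ k : ℕ, k < N → ρ s k ∈ Complex.slitPlane := fun s k hk =>
    Complex.mem_slitPlane_iff.mpr (Or.inl (by linarith [hρre s k hk]))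
  have hρabs : ∀ s : ℝ, ∀ k : ℕ, ‖ρ s k‖ = 1 := by
    intro s k
    have e : Complex.normSq (ρ s k) = 1 := by
      rw [hρ]
      simp only
      rw [Complex.normSq_mul, Complex.normSq_conj, hG1, hG1, one_mul]
    rw [Complex.norm_def, e, Real.sqrt_one]
  -- the winding sum
  set W : ℝ → ℝ := fun s => ∑ k ∈ Finset.range N, (ρ s k).arg with hW
  have hWc : Continuous W := by
    apply continuous_finset_sum
    intro k hk
    rw [Finset.mem_range] at hk
    have hρc : Continuous fun s => ρ s k := by
      apply Continuous.mul
      · exact hGcont.comp (continuous_cl.prodMk continuous_const)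
      · exact Complex.continuous_conj.comp
          (hGcont.comp (continuous_cl.prodMk continuous_const))
    rw [continuous_iff_continuousAt]
    intro s
    exact ContinuousAt.comp (g := Complex.arg) (f := fun s => ρ s k)
      (Complex.continuousAt_arg (hρslit s k hk)) hρc.continuousAt
  -- partial sums exponentiate to telescoping products
  have hexp : ∀ s : ℝ, ∀ m : ℕ,
      Complex.exp ((∑ k ∈ Finset.range m, (ρ s k).arg : ℝ) * Complex.I)
        = G (cl s, tk m) * (starRingEnd ℂ) (G (cl s, tk 0)) := by
    intro s m
    induction m with
    | zero =>
        rw [Complex.mul_conj, hG1]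
        simp
    | succ m ih =>
        rw [Finset.sum_range_succ]
        have e0 : ((∑ k ∈ Finset.range m, (ρ s k).arg + (ρ s m).arg : ℝ) : ℂ) * Complex.I
            = ((∑ k ∈ Finset.range m, (ρ s k).arg : ℝ) : ℂ) * Complex.I
              + ((ρ s m).arg : ℂ) * Complex.I := by
          push_cast
          ring
        rw [e0, Complex.exp_add, ih]
        have eρ : Complex.exp (((ρ s m).arg : ℂ) * Complex.I) = ρ s m := by
          have := Complex.norm_mul_exp_arg_mul_I (ρ s m)
          rwa [hρabs s m, Complex.ofReal_one, one_mul] at this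
        rw [eρ, hρ]
        simp only
        have h1 : G (cl s, tk m) * (starRingEnd ℂ) (G (cl s, tk m)) = 1 := by
          rw [Complex.mul_conj, hG1]
          simp
        linear_combination ((starRingEnd ℂ) (G (cl s, tk 0)) * G (cl s, tk (m + 1))) * h1
  -- hence the winding sum is an integer multiple of 2π
  have hint : ∀ s : ℝ, ∃ n : ℤ, W s = 2 * π * n := by
    intro s
    have h1 := hexp s N
    have htkN : tk N = 2 * π := by
      rw [htk]
      field_simp
    have htk0 : tk 0 = 0 := by simp [htk]
    have hGper : G (cl s, tk N) = G (cl s, tk 0) := by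
      show ret f (pt (cl s) (tk N)) = ret f (pt (cl s) (tk 0))
      rw [htkN, htk0, pt_periodic]
    rw [hGper, Complex.mul_conj, hG1] at h1
    norm_num at h1
    obtain ⟨n, hn⟩ := Complex.exp_eq_one_iff.mp h1
    refine ⟨n, ?_⟩
    have e2 : ((W s : ℝ) : ℂ) * Complex.I = ((2 * π * n : ℝ) : ℂ) * Complex.I := by
      rw [hW]
      push_cast
      rw [hn]
      push_cast
      ring
    have := mul_right_cancel₀ Complex.I_ne_zero e2
    exact_mod_cast this
  -- value at the center
  have hW0 : W 0 = 0 := by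
    rw [hW]
    apply Finset.sum_eq_zero
    intro k hk
    have e1 : G (cl 0, tk (k + 1)) = G (cl 0, tk k) := by
      show ret f (pt (cl 0) (tk (k + 1))) = ret f (pt (cl 0) (tk k))
      rw [cl_zero, pt_zero (tk (k + 1)), pt_zero (tk k)]
    have e : ρ 0 k = 1 := by
      rw [hρ]
      simp only
      rw [e1, Complex.mul_conj, hG1]
      norm_num
    rw [e, Complex.arg_one]
  -- value at the boundary
  have hGb : ∀ t : ℝ, G (1, t) = Complex.exp ((t : ℂ) * Complex.I) := by
    intro t
    show ret f (pt 1 t) = _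
    rw [ret_boundary (hcon _) (pt_one_boundary t), toC_pt_one]
  have hW1 : W 1 = 2 * π := by
    have hterm : ∀ k : ℕ, k < N → (ρ 1 k).arg = 2 * π / N := by
      intro k hk
      have ediff : ((tk (k + 1) : ℝ) : ℂ) - ((tk k : ℝ) : ℂ) = ((2 * π / N : ℝ) : ℂ) := by
        exact_mod_cast congrArg (fun x : ℝ => (x : ℂ)) (htk_step k)
      have e : ρ 1 k = Complex.exp (((2 * π / N : ℝ) : ℂ) * Complex.I) := by
        rw [hρ]
        simp only [cl_one]
        rw [hGb, hGb, ← Complex.exp_conj, map_mul, Complex.conj_ofReal, Complex.conj_I,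
          ← Complex.exp_add]
        congr 1
        linear_combination Complex.I * ediff
      rw [e, Complex.exp_mul_I]
      apply Complex.arg_cos_add_sin_mul_I
      constructor
      · have := Real.pi_pos
        have : (0 : ℝ) < 2 * π / N := by positivity
        linarith [Real.pi_pos]
      · have h3 : (3 : ℝ) ≤ N := by exact_mod_cast hN3
        rw [div_le_iff₀ hNpos]
        nlinarith [Real.pi_pos]
    show (∑ k ∈ Finset.range N, (ρ 1 k).arg) = 2 * π
    rw [Finset.sum_congr rfl fun k hk => hterm k (Finset.mem_range.mp hk)]
    rw [Finset.sum_const, Finset.card_range, nsmul_eq_mul]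
    field_simp
  -- intermediate value theorem gives a non-multiple of 2π
  have hIVT := intermediate_value_Icc (zero_le_one (α := ℝ)) hWc.continuousOn
  have hπmem : π ∈ Set.Icc (W 0) (W 1) := by
    rw [hW0, hW1]
    constructor
    · exact le_of_lt Real.pi_pos
    · linarith [Real.pi_pos]
  obtain ⟨s, _, hs⟩ := hIVT hπmem
  obtain ⟨n, hn⟩ := hint s
  rw [hs] at hn
  have hπ0 := Real.pi_pos
  have hfac : π * (2 * (n : ℝ) - 1) = 0 := by linarith
  have h2n : (2 * (n : ℝ) - 1) = 0 := by
    rcases mul_eq_zero.mp hfac with h | h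
    · exact absurd h (ne_of_gt hπ0)
    · exact h
  have : (2 * n - 1 : ℤ) = 0 := by exact_mod_cast h2n
  omega
end
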